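/- arXiv:2208.14373 — 2 statements merged into one kernel-verified Lean document; each statement's English description precedes it below -/
import Mathlib

section
/- Conservation of mass under the Hermite-basis change-of-parameters map (Proposition, part (i)): Let N ∈ ℕ, let α', α > 0 and u', u ∈ ℝ, and let c_0, …, c_N be real numbers. Define f(v) := Σ_{m=0}^N c_m·ψ_m^{α',u'}(v) and g(v) := Σ_{n=0}^N (Σ_{m=0}^N ℙ_{n,m}·c_m)·ψ_n^{α,u}(v). Then ∫_ℝ g(v) dv = ∫_ℝ f(v) dv. -/
open MeasureTheory Real Finset

/-- Physicists' Hermite polynomials: `H 0 x = 1`, `H 1 x = 2x`,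
`H (n+1) x = 2x · H n x − 2n · H (n−1) x`. -/
noncomputable def physHermite : ℕ → ℝ → ℝ
  | 0 => fun _ => 1
  | 1 => fun x => 2 * x
  | (n + 2) => fun x => 2 * x * physHermite (n + 1) x - 2 * ((n : ℝ) + 1) * physHermite n x

/-- Asymmetrically weighted Hermite function
`ψ_n^{α,u}(v) = (π·2^n·n!)^{-1/2} · H_n((v−u)/α) · exp(−((v−u)/α)²)`. -/
noncomputable def awHermite (α u : ℝ) (n : ℕ) (v : ℝ) : ℝ :=
  (Real.sqrt (Real.pi * 2 ^ n * (n.factorial : ℝ)))⁻¹ * physHermite n ((v - u) / α) *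
    Real.exp (-((v - u) / α) ^ 2)

/-- The weight `ω(v) = √π · α⁻¹ · exp(((v−u)/α)²)`. -/
noncomputable def hermiteWeight (α u : ℝ) (v : ℝ) : ℝ :=
  Real.sqrt Real.pi * α⁻¹ * Real.exp (((v - u) / α) ^ 2)

/-- Transformation matrix entries `ℙ_{n,m} = ∫ ψ_m^{α',u'}(v) · ψ_n^{α,u}(v) · ω(v) dv`. -/
noncomputable def transferMatrix (α' u' α u : ℝ) (n m : ℕ) : ℝ :=
  ∫ v : ℝ, awHermite α' u' m v * awHermite α u n v * hermiteWeight α u v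

/- ## Auxiliary lemmas -/

lemma physHermite_succ (n : ℕ) (x : ℝ) :
    physHermite (n + 1) x = 2 * x * physHermite n x - 2 * (n : ℝ) * physHermite n.pred x := by
  cases n with
  | zero => simp [physHermite]
  | succ m =>
    show physHermite (m + 2) x = _
    rw [physHermite]
    simp only [Nat.pred_succ]
    push_cast
    ring

lemma physHermite_hasDerivAt (n : ℕ) (x : ℝ) :
    HasDerivAt (physHermite n) (2 * (n : ℝ) * physHermite n.pred x) x := by
  induction n using Nat.strong_induction_on with
  | _ n ih =>
    match n with
    | 0 =>
      have : HasDerivAt (fun _ : ℝ => (1 : ℝ)) 0 x := hasDerivAt_const x 1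
      simpa [physHermite] using this
    | 1 =>
      have : HasDerivAt (fun y : ℝ => 2 * y) (2 * 1) x := (hasDerivAt_id x).const_mul 2
      simpa [physHermite] using this
    | (m + 2) =>
      have h1 := ih (m + 1) (by omega) 
      have h0 := ih m (by omega)
      have hmul : HasDerivAt (fun y : ℝ => 2 * y) (2 * 1) x := (hasDerivAt_id x).const_mul 2
      have hx := (hmul.mul h1).sub (h0.const_mul (2 * ((m : ℝ) + 1)))
      have hfn : physHermite (m + 2)
          = fun y : ℝ => 2 * y * physHermite (m + 1) y - 2 * ((m : ℝ) + 1) * physHermite m y := by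
        rw [physHermite]
      rw [hfn]
      refine hx.congr_deriv ?_
      have hrec := physHermite_succ m x
      simp only [Nat.pred_eq_sub_one, Nat.add_sub_cancel] at hrec ⊢
      push_cast
      nlinarith [hrec]

lemma physHermite_polyEq (n : ℕ) : ∃ p : Polynomial ℝ, ∀ x, physHermite n x = p.eval x := by
  induction n using Nat.strong_induction_on with
  | _ n ih =>
    match n with
    | 0 => exact ⟨1, fun x => by simp [physHermite]⟩
    | 1 => exact ⟨Polynomial.C 2 * Polynomial.X, fun x => by simp [physHermite]⟩
    | (m + 2) =>
      obtain ⟨p1, hp1⟩ := ih (m + 1) (by omega)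
      obtain ⟨p0, hp0⟩ := ih m (by omega)
      refine ⟨Polynomial.C 2 * Polynomial.X * p1 - Polynomial.C (2 * ((m : ℝ) + 1)) * p0,
        fun x => ?_⟩
      rw [physHermite]
      simp [hp1, hp0]

lemma pow_le_factorial_mul_exp (k : ℕ) (x : ℝ) :
    |x| ^ k ≤ (k.factorial : ℝ) * Real.exp |x| := by
  have h1 : |x| ^ k / (k.factorial : ℝ) ≤ Real.exp |x| := by
    have hsum : ∑ i ∈ Finset.range (k + 1), |x| ^ i / (i.factorial : ℝ) ≤ Real.exp |x| :=
      Real.sum_le_exp_of_nonneg (abs_nonneg x) (k + 1)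
    refine le_trans ?_ hsum
    refine Finset.single_le_sum (f := fun i => |x| ^ i / (i.factorial : ℝ)) ?_ ?_
    · intro i _
      positivity
    · simp
  have hk : (0 : ℝ) < (k.factorial : ℝ) := by positivity
  calc |x| ^ k = (k.factorial : ℝ) * (|x| ^ k / (k.factorial : ℝ)) := by field_simp
    _ ≤ (k.factorial : ℝ) * Real.exp |x| := by
        exact mul_le_mul_of_nonneg_left h1 hk.le

lemma integrable_pow_mul_gaussian (k : ℕ) :
    Integrable fun x : ℝ => x ^ k * Real.exp (-x ^ 2) := by
  have h2 : Integrable fun x : ℝ => Real.exp (-(1 / 2 : ℝ) * x ^ 2) :=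
    integrable_exp_neg_mul_sq (by norm_num)
  refine Integrable.mono' ((h2.const_mul ((k.factorial : ℝ) * Real.exp 1))) ?_ ?_
  · exact ((continuous_pow k).mul ((continuous_pow 2).neg.rexp)).aestronglyMeasurable
  · filter_upwards with x
    have hb : |x| ^ k ≤ (k.factorial : ℝ) * Real.exp |x| := pow_le_factorial_mul_exp k x
    have hxe : Real.exp |x| * Real.exp (-x ^ 2) ≤ Real.exp 1 * Real.exp (-(1 / 2 : ℝ) * x ^ 2) := by
      rw [← Real.exp_add, ← Real.exp_add]
      apply Real.exp_le_exp.2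
      nlinarith [sq_nonneg (|x| - 1), sq_abs x]
    have : ‖x ^ k * Real.exp (-x ^ 2)‖ = |x| ^ k * Real.exp (-x ^ 2) := by
      rw [norm_mul, norm_pow, Real.norm_eq_abs, Real.norm_eq_abs,
        abs_of_pos (Real.exp_pos _)]
    rw [this]
    calc |x| ^ k * Real.exp (-x ^ 2)
        ≤ ((k.factorial : ℝ) * Real.exp |x|) * Real.exp (-x ^ 2) :=
          mul_le_mul_of_nonneg_right hb (Real.exp_pos _).le
      _ = (k.factorial : ℝ) * (Real.exp |x| * Real.exp (-x ^ 2)) := by ring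
      _ ≤ (k.factorial : ℝ) * (Real.exp 1 * Real.exp (-(1 / 2 : ℝ) * x ^ 2)) := by
          exact mul_le_mul_of_nonneg_left hxe (by positivity)
      _ = (k.factorial : ℝ) * Real.exp 1 * Real.exp (-(1 / 2 : ℝ) * x ^ 2) := by ring

lemma integrable_poly_gaussian (p : Polynomial ℝ) :
    Integrable fun x : ℝ => p.eval x * Real.exp (-x ^ 2) := by
  have h : ∀ x : ℝ, p.eval x = ∑ i ∈ Finset.range (p.natDegree + 1), p.coeff i * x ^ i :=
    fun x => Polynomial.eval_eq_sum_range x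
  simp_rw [h, Finset.sum_mul]
  apply integrable_finset_sum
  intro i _
  simpa [mul_assoc] using (integrable_pow_mul_gaussian i).const_mul (p.coeff i)

lemma tendsto_poly_gaussian (p : Polynomial ℝ) :
    Filter.Tendsto (fun x : ℝ => p.eval x * Real.exp (-x ^ 2))
      (Filter.cocompact ℝ) (nhds 0) := by
  have h : ∀ x : ℝ, p.eval x * Real.exp (-x ^ 2)
      = ∑ i ∈ Finset.range (p.natDegree + 1), p.coeff i * (x ^ i * Real.exp (-x ^ 2)) := by
    intro x
    rw [Polynomial.eval_eq_sum_range, Finset.sum_mul]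
    exact Finset.sum_congr rfl fun i _ => by ring
  simp_rw [h]
  have : (0 : ℝ) = ∑ i ∈ Finset.range (p.natDegree + 1), (0 : ℝ) := by simp
  rw [this]
  refine tendsto_finset_sum _ fun i _ => ?_
  have hten := tendsto_rpow_abs_mul_exp_neg_mul_sq_cocompact (a := 1) one_pos (i : ℝ)
  have hbound : ∀ x : ℝ, ‖p.coeff i * (x ^ i * Real.exp (-x ^ 2))‖
      ≤ |p.coeff i| * (|x| ^ (i : ℝ) * Real.exp (-1 * x ^ 2)) := by
    intro x
    rw [norm_mul, norm_mul, Real.norm_eq_abs, Real.norm_eq_abs, Real.norm_eq_abs,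
      abs_of_pos (Real.exp_pos _), Real.rpow_natCast, neg_one_mul, abs_pow]
  exact squeeze_zero_norm hbound (by simpa using hten.const_mul |p.coeff i|)

lemma integrable_physHermite_gaussian (n : ℕ) :
    Integrable fun x : ℝ => physHermite n x * Real.exp (-x ^ 2) := by
  obtain ⟨p, hp⟩ := physHermite_polyEq n
  simp_rw [hp]
  exact integrable_poly_gaussian p

lemma tendsto_physHermite_gaussian (n : ℕ) :
    Filter.Tendsto (fun x : ℝ => physHermite n x * Real.exp (-x ^ 2))
      (Filter.cocompact ℝ) (nhds 0) := by
  obtain ⟨p, hp⟩ := physHermite_polyEq n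
  simp_rw [hp]
  exact tendsto_poly_gaussian p

lemma integral_physHermite_gaussian (n : ℕ) :
    (∫ x : ℝ, physHermite n x * Real.exp (-x ^ 2))
      = if n = 0 then Real.sqrt Real.pi else 0 := by
  cases n with
  | zero =>
    simp only [if_pos rfl]
    have h : ∀ x : ℝ, physHermite 0 x * Real.exp (-x ^ 2) = Real.exp (-1 * x ^ 2) := by
      intro x; simp [physHermite]
    simp_rw [h]
    rw [integral_gaussian 1]
    norm_num
  | succ m =>
    simp only [Nat.succ_ne_zero, if_neg, reduceCtorEq]
    have hF : ∀ x : ℝ, HasDerivAt (fun y => -(physHermite m y * Real.exp (-y ^ 2)))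
        (physHermite (m + 1) x * Real.exp (-x ^ 2)) x := by
      intro x
      have h1 := physHermite_hasDerivAt m x
      have h2 : HasDerivAt (fun y : ℝ => Real.exp (-y ^ 2))
          (Real.exp (-x ^ 2) * -(2 * x ^ 1)) x := ((hasDerivAt_pow 2 x).neg).exp
      have := (h1.mul h2).neg
      refine this.congr_deriv ?_
      rw [physHermite_succ]
      -- cast
      ring
    have hcc : Filter.Tendsto (fun y : ℝ => -(physHermite m y * Real.exp (-y ^ 2)))
        (Filter.cocompact ℝ) (nhds 0) := by
      simpa using (tendsto_physHermite_gaussian m).neg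
    rw [cocompact_eq_atBot_atTop] at hcc
    have hbot := hcc.mono_left le_sup_left
    have htop := hcc.mono_left le_sup_right
    have := integral_of_hasDerivAt_of_tendsto hF
      (integrable_physHermite_gaussian (m + 1)) hbot htop
    simpa using this

lemma integrable_awHermite (α u : ℝ) (hα : 0 < α) (n : ℕ) :
    Integrable (awHermite α u n) := by
  obtain ⟨p, hp⟩ := physHermite_polyEq n
  unfold awHermite
  simp_rw [mul_assoc, hp]
  apply Integrable.const_mul
  have h1 : Integrable fun x : ℝ => p.eval (x / α) * Real.exp (-(x / α) ^ 2) :=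
    (integrable_poly_gaussian p).comp_div (ne_of_gt hα)
  have h2 := h1.comp_sub_right u
  exact h2

lemma integral_awHermite (α u : ℝ) (hα : 0 < α) (n : ℕ) :
    (∫ v : ℝ, awHermite α u n v) = if n = 0 then α else 0 := by
  unfold awHermite
  simp_rw [mul_assoc]
  rw [integral_const_mul]
  have h1 : (∫ v : ℝ, physHermite n ((v - u) / α) * Real.exp (-((v - u) / α) ^ 2))
      = ∫ x : ℝ, physHermite n (x / α) * Real.exp (-(x / α) ^ 2) :=
    integral_sub_right_eq_self (fun x => physHermite n (x / α) * Real.exp (-(x / α) ^ 2)) u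
  rw [h1]
  have h2 : (∫ x : ℝ, physHermite n (x / α) * Real.exp (-(x / α) ^ 2))
      = |α| • ∫ x : ℝ, physHermite n x * Real.exp (-x ^ 2) :=
    MeasureTheory.Measure.integral_comp_div (fun x => physHermite n x * Real.exp (-x ^ 2)) α
  rw [h2, integral_physHermite_gaussian n, abs_of_pos hα]
  cases n with
  | zero =>
    simp only [if_pos rfl]
    rw [smul_eq_mul]
    have hπ : Real.sqrt Real.pi ≠ 0 := by
      positivity
    simp only [Nat.factorial_zero, pow_zero, Nat.cast_one, mul_one]
    field_simp
    simp only [↓reduceIte]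
    ring
  | succ m =>
    simp

lemma aw0_weight (α u : ℝ) (v : ℝ) :
    awHermite α u 0 v * hermiteWeight α u v = α⁻¹ := by
  unfold awHermite hermiteWeight
  have hexp : Real.exp (-((v - u) / α) ^ 2) * Real.exp (((v - u) / α) ^ 2) = 1 := by
    rw [← Real.exp_add]; simp
  have hπ : Real.sqrt Real.pi ≠ 0 := by positivity
  have h0 : physHermite 0 ((v - u) / α) = 1 := by simp [physHermite]
  rw [h0]
  simp only [Nat.factorial_zero, pow_zero, Nat.cast_one, mul_one]
  have hcalc : (Real.sqrt Real.pi)⁻¹ * Real.exp (-((v - u) / α) ^ 2) *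
      (Real.sqrt Real.pi * α⁻¹ * Real.exp (((v - u) / α) ^ 2))
      = ((Real.sqrt Real.pi)⁻¹ * Real.sqrt Real.pi) *
        (Real.exp (-((v - u) / α) ^ 2) * Real.exp (((v - u) / α) ^ 2)) * α⁻¹ := by ring
  rw [hcalc, hexp, inv_mul_cancel₀ hπ, one_mul, one_mul]

lemma transfer_zero (α' u' α u : ℝ) (hα' : 0 < α') (hα : 0 < α) (m : ℕ) :
    transferMatrix α' u' α u 0 m = α⁻¹ * (if m = 0 then α' else 0) := by
  unfold transferMatrix
  have h : ∀ v : ℝ, awHermite α' u' m v * awHermite α u 0 v * hermiteWeight α u v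
      = awHermite α' u' m v * α⁻¹ := by
    intro v; rw [mul_assoc, aw0_weight α u v]
  simp_rw [h]
  rw [integral_mul_const, integral_awHermite α' u' hα' m]
  ring

/-- Conservation of mass under the Hermite-basis change-of-parameters map. -/
theorem mass_conservation_change_of_basis (N : ℕ) (α' α u' u : ℝ)
    (hα' : 0 < α') (hα : 0 < α) (c : ℕ → ℝ) :
    (∫ v : ℝ, ∑ n ∈ Finset.range (N + 1),
        (∑ m ∈ Finset.range (N + 1), transferMatrix α' u' α u n m * c m) * awHermite α u n v)
      = ∫ v : ℝ, ∑ m ∈ Finset.range (N + 1), c m * awHermite α' u' m v := by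
  rw [integral_finset_sum _ (fun n _ =>
    ((integrable_awHermite α u hα n).const_mul _)),
    integral_finset_sum _ (fun m _ =>
    ((integrable_awHermite α' u' hα' m).const_mul _))]
  simp_rw [integral_const_mul, integral_awHermite α u hα, integral_awHermite α' u' hα',
    mul_ite, mul_zero]
  rw [Finset.sum_ite_eq', Finset.sum_ite_eq']
  simp only [Finset.mem_range, Nat.zero_lt_succ, if_pos]
  have h : ∀ m : ℕ, transferMatrix α' u' α u 0 m * c m
      = if m = 0 then α⁻¹ * α' * c m else 0 := by
    intro m
    rw [transfer_zero α' u' α u hα' hα m]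
    split_ifs with hm <;> simp [hm]
  simp_rw [h]
  rw [Finset.sum_ite_eq']
  simp only [Finset.mem_range, Nat.zero_lt_succ, if_pos]
  field_simp
end

section
/- Explicit formula for the transformation matrix, pure scaling case: Let α', α > 0 and u', u ∈ ℝ with α ≠ α' and u = u', and set a := α/α', K_{n,m} := 2^{(m−n)/2}·(m!)^{−1/2}·(n!)^{1/2}. Then for all n, m ∈ ℕ with n ≥ m: if n − m is even, ℙ_{n,m} = K_{n,m}·a^{−(m+1)}·(1/a² − 1)^{(n−m)/2}/((n−m)/2)!, and if n − m is odd, ℙ_{n,m} = 0. -/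
open MeasureTheory Real Finset

/-- The coefficient `K_{n,m} = 2^{(m−n)/2} · (m!)^{−1/2} · (n!)^{1/2}`. -/
noncomputable def Kcoef (n m : ℕ) : ℝ :=
  (2 : ℝ) ^ (((m : ℝ) - (n : ℝ)) / 2) * (Real.sqrt (m.factorial : ℝ))⁻¹ *
    Real.sqrt (n.factorial : ℝ)

section AuxHermite
open Polynomial Filter

/-- polynomial version -/
noncomputable def hPoly : ℕ → ℝ[X]
  | 0 => 1
  | 1 => C 2 * X
  | (n + 2) => C 2 * X * hPoly (n + 1) - C (2 * ((n : ℝ) + 1)) * hPoly n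

lemma physHermite_eval (n : ℕ) (x : ℝ) : physHermite n x = (hPoly n).eval x := by
  induction n using Nat.twoStepInduction with
  | zero => simp [physHermite, hPoly]
  | one => simp [physHermite, hPoly]
  | more n ih1 ih2 => simp only [physHermite, hPoly, ih1, ih2, eval_sub, eval_mul, eval_C, eval_X]

lemma hPoly_rec (n : ℕ) : hPoly (n + 1) = C 2 * X * hPoly n - C (2 * (n : ℝ)) * hPoly (n - 1) := by
  cases n with
  | zero => simp [hPoly]
  | succ k => simp [hPoly]

lemma hPoly_deriv (n : ℕ) : (hPoly n).derivative = C (2 * (n : ℝ)) * hPoly (n - 1) := by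
  induction n using Nat.twoStepInduction with
  | zero => simp [hPoly]
  | one => simp [hPoly]
  | more n ih1 ih2 =>
    show (hPoly (n+2)).derivative = _
    rw [hPoly]
    rw [derivative_sub, derivative_mul, derivative_mul, derivative_mul, ih1, ih2]
    simp only [derivative_C, derivative_X, zero_mul, zero_add, mul_one, Nat.add_sub_cancel]
    have h : C 2 * X * hPoly n = hPoly (n+1) + C (2*(n:ℝ)) * hPoly (n-1) := by
      rw [hPoly_rec n]; ring
    simp only [show n+2-1 = n+1 from rfl, Nat.add_sub_cancel, Nat.cast_add, Nat.cast_one,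
      Nat.cast_ofNat, map_add, map_mul, map_ofNat, map_one, map_natCast] at *
    linear_combination (2*((n:ℝ[X])+1)) * h

lemma hPoly_zero : hPoly 0 = 1 := by rw [hPoly]
lemma hPoly_one : hPoly 1 = Polynomial.C 2 * Polynomial.X := by rw [hPoly]

lemma integrable_pow_gauss {b : ℝ} (hb : 0 < b) (k : ℕ) :
    Integrable fun x : ℝ => x ^ k * Real.exp (-b * x ^ 2) := by
  have h := integrable_rpow_mul_exp_neg_mul_sq hb (s := (k : ℝ))
    (lt_of_lt_of_le neg_one_lt_zero (Nat.cast_nonneg k))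
  simpa only [Real.rpow_natCast] using h

lemma integrable_poly_gauss {b : ℝ} (hb : 0 < b) (P : ℝ[X]) :
    Integrable fun x : ℝ => P.eval x * Real.exp (-b * x ^ 2) := by
  have h : ∀ x : ℝ, P.eval x * Real.exp (-b * x ^ 2)
      = ∑ i ∈ Finset.range (P.natDegree + 1), P.coeff i * (x ^ i * Real.exp (-b * x ^ 2)) := by
    intro x
    rw [Polynomial.eval_eq_sum_range, Finset.sum_mul]
    simp [mul_assoc]
  simp_rw [h]
  exact integrable_finset_sum _ fun i _ => (integrable_pow_gauss hb i).const_mul _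

lemma tendsto_pow_gauss_atTop {b : ℝ} (hb : 0 < b) (k : ℕ) :
    Tendsto (fun x : ℝ => x ^ k * Real.exp (-b * x ^ 2)) atTop (nhds 0) := by
  have hlin : Tendsto (fun x : ℝ => -(1/2) * x) atTop atBot := by
    have h1 : Tendsto (fun x : ℝ => (1/2 : ℝ) * x) atTop atTop :=
      Tendsto.const_mul_atTop (by norm_num) tendsto_id
    have := tendsto_neg_atTop_atBot.comp h1
    refine this.congr fun x => by simp [Function.comp]
  have h := (rpow_mul_exp_neg_mul_sq_isLittleO_exp_neg hb (k : ℝ)).trans_tendsto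
    (Real.tendsto_exp_atBot.comp hlin)
  refine h.congr' ?_
  filter_upwards [eventually_gt_atTop (0:ℝ)] with x hx
  rw [Real.rpow_natCast]

lemma tendsto_poly_gauss_atTop {b : ℝ} (hb : 0 < b) (P : ℝ[X]) :
    Tendsto (fun x : ℝ => P.eval x * Real.exp (-b * x ^ 2)) atTop (nhds 0) := by
  have h : ∀ x : ℝ, P.eval x * Real.exp (-b * x ^ 2)
      = ∑ i ∈ Finset.range (P.natDegree + 1), P.coeff i * (x ^ i * Real.exp (-b * x ^ 2)) := by
    intro x
    rw [Polynomial.eval_eq_sum_range, Finset.sum_mul]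
    simp [mul_assoc]
  simp_rw [h]
  have : ∑ i ∈ Finset.range (P.natDegree + 1), (P.coeff i * 0 : ℝ) = 0 := by simp
  rw [← this]
  exact tendsto_finset_sum _ fun i _ => ((tendsto_pow_gauss_atTop hb i).const_mul _)

lemma tendsto_poly_gauss_atBot {b : ℝ} (hb : 0 < b) (P : ℝ[X]) :
    Tendsto (fun x : ℝ => P.eval x * Real.exp (-b * x ^ 2)) atBot (nhds 0) := by
  have h := (tendsto_poly_gauss_atTop hb (P.comp (-X))).comp tendsto_neg_atBot_atTop
  refine h.congr fun x => ?_
  simp [Polynomial.eval_comp]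

lemma integral_deriv_gauss_zero {b : ℝ} (hb : 0 < b) (P : ℝ[X]) :
    ∫ x : ℝ, (P.derivative.eval x - 2 * b * x * P.eval x) * Real.exp (-b * x ^ 2) = 0 := by
  have hder : ∀ x : ℝ, HasDerivAt (fun y => P.eval y * Real.exp (-b * y ^ 2))
      ((P.derivative.eval x - 2 * b * x * P.eval x) * Real.exp (-b * x ^ 2)) x := by
    intro x
    have h1 : HasDerivAt (fun y : ℝ => P.eval y) (P.derivative.eval x) x := P.hasDerivAt x
    have h2 : HasDerivAt (fun y : ℝ => Real.exp (-b * y ^ 2))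
        ((-b * (2 * x)) * Real.exp (-b * x ^ 2)) x := by
      have h3 : HasDerivAt (fun y : ℝ => -b * y ^ 2) (-b * (2 * x)) x := by
        simpa using (hasDerivAt_pow 2 x).const_mul (-b)
      simpa [mul_comm] using h3.exp
    have := h1.mul h2
    refine this.congr_deriv ?_
    ring
  have hint : Integrable fun x : ℝ =>
      (P.derivative.eval x - 2 * b * x * P.eval x) * Real.exp (-b * x ^ 2) := by
    have h : ∀ x : ℝ, (P.derivative.eval x - 2 * b * x * P.eval x) * Real.exp (-b * x ^ 2)
        = (P.derivative - C (2 * b) * X * P).eval x * Real.exp (-b * x ^ 2) := by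
      intro x; simp only [eval_sub, eval_mul, eval_C, eval_X]
    simp_rw [h]
    exact integrable_poly_gauss hb _
  have := integral_of_hasDerivAt_of_tendsto hder hint
    (tendsto_poly_gauss_atBot hb P) (tendsto_poly_gauss_atTop hb P)
  simpa using this
noncomputable def Jint (a : ℝ) (n m : ℕ) : ℝ :=
  ∫ x : ℝ, (hPoly m).eval (a * x) * (hPoly n).eval x * Real.exp (-a ^ 2 * x ^ 2)

lemma integrable_J (a : ℝ) (ha : 0 < a) (n m : ℕ) :
    Integrable fun x : ℝ =>
      (hPoly m).eval (a * x) * (hPoly n).eval x * Real.exp (-a ^ 2 * x ^ 2) := by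
  have h := integrable_poly_gauss (b := a ^ 2) (by positivity)
    (((hPoly m).comp (C a * X)) * hPoly n)
  refine h.congr (Filter.Eventually.of_forall fun x => ?_)
  simp [Polynomial.eval_comp]

lemma Jint_step1 (a : ℝ) (ha : 0 < a) (n m : ℕ) :
    a * Jint a n (m + 1) = 2 * (n : ℝ) * Jint a (n - 1) m := by
  have key := integral_deriv_gauss_zero (b := a ^ 2) (by positivity)
    (((hPoly m).comp (C a * X)) * hPoly n)
  have hpt : ∀ x : ℝ,
      ((((hPoly m).comp (C a * X)) * hPoly n).derivative.eval x
        - 2 * a ^ 2 * x * ((((hPoly m).comp (C a * X)) * hPoly n).eval x))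
          * Real.exp (-a ^ 2 * x ^ 2)
      = 2 * (n : ℝ) * ((hPoly m).eval (a * x) * (hPoly (n - 1)).eval x
            * Real.exp (-a ^ 2 * x ^ 2))
        - a * ((hPoly (m + 1)).eval (a * x) * (hPoly n).eval x
            * Real.exp (-a ^ 2 * x ^ 2)) := by
    intro x
    rw [derivative_mul, Polynomial.derivative_comp, hPoly_deriv n, hPoly_deriv m,
      hPoly_rec m]
    simp only [eval_add, eval_mul, eval_sub, eval_C, eval_X, Polynomial.eval_comp,
      derivative_mul, derivative_C, derivative_X, zero_mul, zero_add, mul_one, eval_one]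
    ring
  rw [funext hpt] at key
  have h1 := integrable_J a ha (n - 1) m
  have h2 := integrable_J a ha n (m + 1)
  rw [integral_sub ((h1.const_mul _)) ((h2.const_mul _)), integral_const_mul,
    integral_const_mul, sub_eq_zero] at key
  rw [Jint, Jint, ← key]

lemma Jint_step2 (a : ℝ) (ha : 0 < a) (n : ℕ) :
    a ^ 2 * Jint a (n + 2) 0 = 2 * ((n : ℝ) + 1) * (1 - a ^ 2) * Jint a n 0 := by
  have key := integral_deriv_gauss_zero (b := a ^ 2) (by positivity) (hPoly (n + 1))
  have hpt : ∀ x : ℝ,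
      ((hPoly (n + 1)).derivative.eval x - 2 * a ^ 2 * x * (hPoly (n + 1)).eval x)
        * Real.exp (-a ^ 2 * x ^ 2)
      = 2 * ((n : ℝ) + 1) * (1 - a ^ 2)
          * ((hPoly 0).eval (a * x) * (hPoly n).eval x * Real.exp (-a ^ 2 * x ^ 2))
        - a ^ 2 * ((hPoly 0).eval (a * x) * (hPoly (n + 2)).eval x
          * Real.exp (-a ^ 2 * x ^ 2)) := by
    intro x
    have h2 : hPoly (n + 2) = C 2 * X * hPoly (n + 1) - C (2 * ((n : ℝ) + 1)) * hPoly n := by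
      have := hPoly_rec (n + 1)
      simpa using this
    rw [hPoly_deriv (n + 1), h2, hPoly_zero]
    simp only [eval_add, eval_mul, eval_sub, eval_C, eval_X, eval_one, Nat.add_sub_cancel,
      Nat.cast_add, Nat.cast_one]
    ring
  rw [funext hpt] at key
  have h1 := integrable_J a ha n 0
  have h2 := integrable_J a ha (n + 2) 0
  rw [integral_sub ((h1.const_mul _)) ((h2.const_mul _)), integral_const_mul,
    integral_const_mul, sub_eq_zero] at key
  rw [Jint, Jint, ← key]

lemma Jint_one_zero (a : ℝ) (ha : 0 < a) : Jint a 1 0 = 0 := by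
  have key := integral_deriv_gauss_zero (b := a ^ 2) (by positivity) (hPoly 0)
  have hpt : ∀ x : ℝ,
      ((hPoly 0).derivative.eval x - 2 * a ^ 2 * x * (hPoly 0).eval x)
        * Real.exp (-a ^ 2 * x ^ 2)
      = (-a ^ 2) * ((hPoly 0).eval (a * x) * (hPoly 1).eval x * Real.exp (-a ^ 2 * x ^ 2)) := by
    intro x
    rw [hPoly_zero, hPoly_one]
    simp only [derivative_one, eval_zero, eval_one, eval_mul, eval_C, eval_X]
    ring
  rw [funext hpt] at key
  rw [integral_const_mul] at key
  have : (-a ^ 2 : ℝ) ≠ 0 := by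
    simp only [ne_eq, neg_eq_zero, pow_eq_zero_iff]
    exact fun h => ha.ne' (by simpa using h)
  rw [Jint]
  exact (mul_eq_zero.mp key).resolve_left this

lemma Jint_zero_zero (a : ℝ) (ha : 0 < a) : Jint a 0 0 = Real.sqrt π / a := by
  rw [Jint]
  have : ∀ x : ℝ, (hPoly 0).eval (a * x) * (hPoly 0).eval x * Real.exp (-a ^ 2 * x ^ 2)
      = Real.exp (-a ^ 2 * x ^ 2) := by intro x; rw [hPoly_zero]; simp
  rw [funext this, integral_gaussian]
  rw [Real.sqrt_div' π (by positivity), Real.sqrt_sq ha.le]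


lemma Jint_succ_succ (a : ℝ) (ha : 0 < a) (n : ℕ) :
    Jint a (n + 2) 0 = 2 * ((n : ℝ) + 1) * (1 - a ^ 2) / a ^ 2 * Jint a n 0 := by
  have h := Jint_step2 a ha n
  have ha2 : (a : ℝ) ^ 2 ≠ 0 := pow_ne_zero 2 ha.ne'
  field_simp
  linarith

lemma Jint_even_zero (a : ℝ) (ha : 0 < a) (p : ℕ) :
    Jint a (2 * p) 0 = Real.sqrt π / a * ((1 - a ^ 2) / a ^ 2) ^ p
      * ((2 * p).factorial : ℝ) / (p.factorial : ℝ) := by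
  induction p with
  | zero => simpa using Jint_zero_zero a ha
  | succ p ih =>
    have h2 : 2 * (p + 1) = 2 * p + 2 := by ring
    rw [h2, Jint_succ_succ a ha (2 * p), ih]
    have hfac : ((2 * p + 2).factorial : ℝ) = (2 * (p : ℝ) + 2) * (2 * p + 1) * (2 * p).factorial := by
      rw [show (2 * p + 2) = (2 * p + 1) + 1 from rfl, Nat.factorial_succ, Nat.factorial_succ]
      push_cast; ring
    have hfac2 : ((p + 1).factorial : ℝ) = ((p : ℝ) + 1) * p.factorial := by
      rw [Nat.factorial_succ]; push_cast; ring
    rw [hfac, hfac2]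
    have ha2 : (a : ℝ) ^ 2 ≠ 0 := pow_ne_zero 2 ha.ne'
    have hp : (p.factorial : ℝ) ≠ 0 := Nat.cast_ne_zero.mpr p.factorial_ne_zero
    have hp1 : ((p : ℝ) + 1) ≠ 0 := by positivity
    simp only [div_pow]
    field_simp
    push_cast
    ring
  done

lemma Jint_odd_zero (a : ℝ) (ha : 0 < a) (p : ℕ) : Jint a (2 * p + 1) 0 = 0 := by
  induction p with
  | zero => simpa using Jint_one_zero a ha
  | succ p ih =>
    have h2 : 2 * (p + 1) + 1 = (2 * p + 1) + 2 := by ring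
    rw [h2, Jint_succ_succ a ha (2 * p + 1), ih, mul_zero]

lemma Jint_formula (a : ℝ) (ha : 0 < a) :
    ∀ m n : ℕ, m ≤ n → Jint a n m
      = (2 / a) ^ m * ((n.factorial : ℝ) / ((n - m).factorial : ℝ)) * Jint a (n - m) 0 := by
  intro m
  induction m with
  | zero =>
    intro n _
    simp [Nat.cast_ne_zero.mpr n.factorial_ne_zero, div_self]
  | succ m ih =>
    intro n hn
    obtain ⟨k, rfl⟩ : ∃ k, n = k + 1 := ⟨n - 1, by omega⟩
    have hmk : m ≤ k := by omega
    have hstep : Jint a (k + 1) (m + 1) = 2 * ((k : ℝ) + 1) / a * Jint a k m := by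
      have h := Jint_step1 a ha (k + 1) m
      simp only [Nat.add_sub_cancel, Nat.cast_add, Nat.cast_one] at h
      field_simp
      linarith
    rw [hstep, ih k hmk]
    have hs : k + 1 - (m + 1) = k - m := by omega
    rw [hs]
    have hfac : ((k + 1).factorial : ℝ) = ((k : ℝ) + 1) * k.factorial := by
      rw [Nat.factorial_succ]; push_cast; ring
    rw [hfac]
    ring

lemma Jint_closed_even (a : ℝ) (ha : 0 < a) (n m : ℕ) (hmn : m ≤ n) (hp : Even (n - m)) :
    Jint a n m = Real.sqrt π * 2 ^ m * (n.factorial : ℝ) / a ^ (m + 1)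
      * ((1 - a ^ 2) / a ^ 2) ^ ((n - m) / 2) / ((((n - m) / 2).factorial : ℝ)) := by
  obtain ⟨p, hpp⟩ := hp
  have h2 : n - m = 2 * p := by omega
  rw [Jint_formula a ha m n hmn, h2, Jint_even_zero a ha p]
  have hq : 2 * p / 2 = p := by omega
  rw [hq]
  have hfac : ((2 * p).factorial : ℝ) ≠ 0 := Nat.cast_ne_zero.mpr (2 * p).factorial_ne_zero
  have hpf : (p.factorial : ℝ) ≠ 0 := Nat.cast_ne_zero.mpr p.factorial_ne_zero
  have ha0 : (a : ℝ) ≠ 0 := ha.ne'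
  rw [div_pow]
  field_simp
  ring

lemma Jint_closed_odd (a : ℝ) (ha : 0 < a) (n m : ℕ) (hmn : m ≤ n) (hp : Odd (n - m)) :
    Jint a n m = 0 := by
  obtain ⟨p, hpp⟩ := hp
  rw [Jint_formula a ha m n hmn, hpp, Jint_odd_zero a ha p, mul_zero]
lemma sqrt_two_pow (k : ℕ) : Real.sqrt ((2 : ℝ) ^ k) = (2 : ℝ) ^ ((k : ℝ) / 2) := by
  rw [Real.sqrt_eq_rpow, ← Real.rpow_natCast 2 k, ← Real.rpow_mul (by norm_num)]
  congr 1
  ring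

lemma Kconst (n m : ℕ) :
    (Real.sqrt (π * 2 ^ m * (m.factorial : ℝ)))⁻¹
      * (Real.sqrt (π * 2 ^ n * (n.factorial : ℝ)))⁻¹ * Real.sqrt π
      * (Real.sqrt π * 2 ^ m * (n.factorial : ℝ)) = Kcoef n m := by
  have hsm : Real.sqrt (π * 2 ^ m * (m.factorial : ℝ))
      = Real.sqrt π * Real.sqrt ((2:ℝ) ^ m) * Real.sqrt (m.factorial : ℝ) := by
    rw [Real.sqrt_mul (by positivity), Real.sqrt_mul (by positivity)]
  have hsn : Real.sqrt (π * 2 ^ n * (n.factorial : ℝ))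
      = Real.sqrt π * Real.sqrt ((2:ℝ) ^ n) * Real.sqrt (n.factorial : ℝ) := by
    rw [Real.sqrt_mul (by positivity), Real.sqrt_mul (by positivity)]
  have h2m : (2 : ℝ) ^ m = Real.sqrt ((2:ℝ) ^ m) * Real.sqrt ((2:ℝ) ^ m) :=
    (Real.mul_self_sqrt (by positivity)).symm
  have hfn : (n.factorial : ℝ)
      = Real.sqrt (n.factorial : ℝ) * Real.sqrt (n.factorial : ℝ) :=
    (Real.mul_self_sqrt (Nat.cast_nonneg _)).symm
  have hKpow : (2 : ℝ) ^ (((m : ℝ) - (n : ℝ)) / 2)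
      = Real.sqrt ((2:ℝ) ^ m) / Real.sqrt ((2:ℝ) ^ n) := by
    rw [sqrt_two_pow, sqrt_two_pow, ← Real.rpow_sub (by norm_num)]
    congr 1
    ring
  rw [Kcoef, hKpow, hsm, hsn]
  set A := Real.sqrt ((2:ℝ) ^ m) with hA
  set B := Real.sqrt ((2:ℝ) ^ n) with hB
  set Cm := Real.sqrt (m.factorial : ℝ) with hCm
  set Cn := Real.sqrt (n.factorial : ℝ) with hCn
  set P := Real.sqrt π with hP
  have hA2 : (2:ℝ) ^ m = A * A := by rw [hA]; exact (Real.mul_self_sqrt (by positivity)).symm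
  have hCn2 : (n.factorial : ℝ) = Cn * Cn := by
    rw [hCn]; exact (Real.mul_self_sqrt (Nat.cast_nonneg _)).symm
  have h1 : Real.sqrt π ≠ 0 := by positivity
  have h2 : Real.sqrt ((2:ℝ) ^ m) ≠ 0 := by positivity
  have h3 : Real.sqrt ((2:ℝ) ^ n) ≠ 0 := by positivity
  have h4 : Real.sqrt (m.factorial : ℝ) ≠ 0 := by
    have : (0:ℝ) < m.factorial := by exact_mod_cast m.factorial_pos
    positivity
  have h5 : Real.sqrt (n.factorial : ℝ) ≠ 0 := by
    have : (0:ℝ) < n.factorial := by exact_mod_cast n.factorial_pos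
    positivity
  rw [hA2, hCn2]
  field_simp
  rw [hP]
  field_simp



/-- Explicit formula for the transformation matrix, pure scaling case
(`α ≠ α'` and `u = u'`). -/
theorem transferMatrix_pure_scaling (α' α u' u : ℝ) (hα' : 0 < α') (hα : 0 < α)
    (hαne : α ≠ α') (hueq : u = u') (a : ℝ) (ha : a = α / α')
    (n m : ℕ) (hnm : m ≤ n) :
    (Even (n - m) →
      transferMatrix α' u' α u n m
        = Kcoef n m * (a ^ (m + 1))⁻¹ * (1 / a ^ 2 - 1) ^ ((n - m) / 2) /
            (((n - m) / 2).factorial : ℝ)) ∧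
    (Odd (n - m) → transferMatrix α' u' α u n m = 0) := by
  subst hueq
  subst ha
  have ha0 : 0 < α / α' := div_pos hα hα'
  set a := α / α' with hadef
  have haa : a ≠ 0 := ha0.ne'
  -- Step 1: reduce transferMatrix to Jint
  have hTM : transferMatrix α' u α u n m
      = ((Real.sqrt (π * 2 ^ m * (m.factorial : ℝ)))⁻¹
          * (Real.sqrt (π * 2 ^ n * (n.factorial : ℝ)))⁻¹ * Real.sqrt π)
        * Jint a n m := by
    rw [transferMatrix]
    have hpt : ∀ v : ℝ, awHermite α' u m v * awHermite α u n v * hermiteWeight α u v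
        = ((Real.sqrt (π * 2 ^ m * (m.factorial : ℝ)))⁻¹
            * (Real.sqrt (π * 2 ^ n * (n.factorial : ℝ)))⁻¹ * Real.sqrt π * α⁻¹)
          * ((hPoly m).eval ((v - u) / α') * (hPoly n).eval ((v - u) / α)
            * Real.exp (-((v - u) / α') ^ 2)) := by
      intro v
      have hE : Real.exp (-((v - u) / α) ^ 2) * Real.exp (((v - u) / α) ^ 2) = 1 := by
        rw [← Real.exp_add, neg_add_cancel, Real.exp_zero]
      rw [awHermite, awHermite, hermiteWeight, physHermite_eval, physHermite_eval]
      linear_combination ((Real.sqrt (π * 2 ^ m * (m.factorial : ℝ)))⁻¹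
          * (Real.sqrt (π * 2 ^ n * (n.factorial : ℝ)))⁻¹ * Real.sqrt π * α⁻¹
          * (hPoly m).eval ((v - u) / α') * (hPoly n).eval ((v - u) / α)
          * Real.exp (-((v - u) / α') ^ 2)) * hE
    rw [funext hpt, integral_const_mul]
    rw [mul_assoc]
    congr 1
    have hshift := integral_sub_right_eq_self (μ := volume)
      (fun w : ℝ => (hPoly m).eval (w / α') * (hPoly n).eval (w / α)
        * Real.exp (-(w / α') ^ 2)) u
    rw [hshift]
    have hcomp := MeasureTheory.Measure.integral_comp_mul_left
      (fun w : ℝ => (hPoly m).eval (w / α') * (hPoly n).eval (w / α)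
        * Real.exp (-(w / α') ^ 2)) α
    simp only [smul_eq_mul] at hcomp
    have hptx : ∀ x : ℝ, (hPoly m).eval (α * x / α') * (hPoly n).eval (α * x / α)
        * Real.exp (-(α * x / α') ^ 2)
        = (hPoly m).eval (a * x) * (hPoly n).eval x * Real.exp (-a ^ 2 * x ^ 2) := by
      intro x
      have h1 : α * x / α' = a * x := by rw [hadef]; ring
      have h2 : α * x / α = x := by field_simp
      rw [h1, h2]
      congr 1
      ring
    rw [Jint, funext (fun x => (hptx x).symm), hcomp, abs_of_pos (inv_pos.mpr hα)]
  constructor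
  · intro hev
    rw [hTM, Jint_closed_even a ha0 n m hnm hev, ← Kconst n m]
    have hc : (1 - a ^ 2) / a ^ 2 = 1 / a ^ 2 - 1 := by
      field_simp
    rw [hc]
    have hpf : ((((n - m) / 2).factorial : ℕ) : ℝ) ≠ 0 :=
      Nat.cast_ne_zero.mpr ((n - m) / 2).factorial_ne_zero
    have hap : (a : ℝ) ^ (m + 1) ≠ 0 := pow_ne_zero _ haa
    field_simp
  · intro hodd
    rw [hTM, Jint_closed_odd a ha0 n m hnm hodd, mul_zero]

end AuxHermite
end
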